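/- arXiv:2110.00932 — 2 statements merged into one kernel-verified Lean document; each statement's English description precedes it below -/
import Mathlib

section
/- The identity channel id : L(H) → L(H) (dim H ≥ 2) is not compatible with itself: there is no channel Λ : L(H) → L(H ⊗ H) such that Tr₂[Λ(ρ)] = ρ and Tr₁[Λ(ρ)] = ρ for all density matrices ρ (no-cloning/no-broadcasting for the identity channel). -/
open Matrix BigOperators ComplexOrder

noncomputable section

/-- Partial trace over the second tensor factor. -/
def ptraceRight {A B : Type*} [Fintype B] (M : Matrix (A × B) (A × B) ℂ) :
    Matrix A A ℂ := fun i j => ∑ k, M (i, k) (j, k)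

/-- Partial trace over the first tensor factor. -/
def ptraceLeft {A B : Type*} [Fintype A] (M : Matrix (A × B) (A × B) ℂ) :
    Matrix B B ℂ := fun i j => ∑ k, M (k, i) (k, j)

/-- Complete positivity, via existence of a Kraus decomposition (Choi's theorem). -/
def IsCP {H K : Type*} [Fintype H] [Fintype K]
    (Φ : Matrix H H ℂ →ₗ[ℂ] Matrix K K ℂ) : Prop :=
  ∃ (m : ℕ) (Ks : Fin m → Matrix K H ℂ), ∀ ρ, Φ ρ = ∑ i, Ks i * ρ * (Ks i)ᴴ

def IsTP {H K : Type*} [Fintype H] [Fintype K]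
    (Φ : Matrix H H ℂ →ₗ[ℂ] Matrix K K ℂ) : Prop :=
  ∀ ρ, (Φ ρ).trace = ρ.trace

/-- A quantum channel is a CPTP map. -/
def IsChannel {H K : Type*} [Fintype H] [Fintype K]
    (Φ : Matrix H H ℂ →ₗ[ℂ] Matrix K K ℂ) : Prop := IsCP Φ ∧ IsTP Φ

/-- A quantum instrument: a finite family of CP maps summing to a CPTP map. -/
def IsInstrument {ι H K : Type*} [Fintype ι] [Fintype H] [Fintype K]
    (Φ : ι → (Matrix H H ℂ →ₗ[ℂ] Matrix K K ℂ)) : Prop :=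
  (∀ x, IsCP (Φ x)) ∧ IsTP (∑ x, Φ x)

def IsDensity {H : Type*} [Fintype H] (ρ : Matrix H H ℂ) : Prop :=
  ρ.PosSemidef ∧ ρ.trace = 1

def IsPOVM {ι H : Type*} [Fintype ι] [Fintype H] [DecidableEq H]
    (A : ι → Matrix H H ℂ) : Prop :=
  (∀ x, (A x).PosSemidef) ∧ (∑ x, A x) = 1

/-- `Φd` is the Heisenberg dual of `Φ`. -/
def IsDual {H K : Type*} [Fintype H] [Fintype K]
    (Φ : Matrix H H ℂ →ₗ[ℂ] Matrix K K ℂ)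
    (Φd : Matrix K K ℂ →ₗ[ℂ] Matrix H H ℂ) : Prop :=
  ∀ ρ X, ((Φ ρ) * X).trace = (ρ * Φd X).trace

/-- The instrument `I` measures the observable `A`. -/
def ACompatible {ι H K : Type*} [Fintype ι] [Fintype H] [Fintype K]
    (A : ι → Matrix H H ℂ) (I : ι → (Matrix H H ℂ →ₗ[ℂ] Matrix K K ℂ)) : Prop :=
  ∀ ρ, IsDensity ρ → ∀ x, (I x ρ).trace = (ρ * A x).trace

/-- Observable-observable compatibility: existence of a joint POVM. -/
def ObsCompatible {ιx ιy H : Type*} [Fintype ιx] [Fintype ιy] [Fintype H] [DecidableEq H]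
    (A : ιx → Matrix H H ℂ) (B : ιy → Matrix H H ℂ) : Prop :=
  ∃ G : ιx × ιy → Matrix H H ℂ, IsPOVM G ∧
    (∀ x, ∑ y, G (x, y) = A x) ∧ (∀ y, ∑ x, G (x, y) = B y)

/-- Channel-channel compatibility: existence of a joint channel. -/
def ChannelsCompatible {H K₁ K₂ : Type*} [Fintype H] [Fintype K₁] [Fintype K₂]
    (Λ₁ : Matrix H H ℂ →ₗ[ℂ] Matrix K₁ K₁ ℂ)
    (Λ₂ : Matrix H H ℂ →ₗ[ℂ] Matrix K₂ K₂ ℂ) : Prop :=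
  ∃ Λ : Matrix H H ℂ →ₗ[ℂ] Matrix (K₁ × K₂) (K₁ × K₂) ℂ, IsChannel Λ ∧
    (∀ ρ, ptraceRight (Λ ρ) = Λ₁ ρ) ∧ (∀ ρ, ptraceLeft (Λ ρ) = Λ₂ ρ)

/-- Observable-channel compatibility. -/
def ObsChannelCompatible {ι H K : Type*} [Fintype ι] [Fintype H] [Fintype K]
    (A : ι → Matrix H H ℂ) (Λ : Matrix H H ℂ →ₗ[ℂ] Matrix K K ℂ) : Prop :=
  ∃ I : ι → (Matrix H H ℂ →ₗ[ℂ] Matrix K K ℂ),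
    IsInstrument I ∧ ACompatible A I ∧ (∑ x, I x) = Λ

/-- Traditional compatibility of two instruments with the same output space. -/
def TraditionallyCompatible {ιx ιy H K : Type*} [Fintype ιx] [Fintype ιy] [Fintype H] [Fintype K]
    (I₁ : ιx → (Matrix H H ℂ →ₗ[ℂ] Matrix K K ℂ))
    (I₂ : ιy → (Matrix H H ℂ →ₗ[ℂ] Matrix K K ℂ)) : Prop :=
  ∃ Φ : ιx × ιy → (Matrix H H ℂ →ₗ[ℂ] Matrix K K ℂ), IsInstrument Φ ∧
    (∀ x, ∑ y, Φ (x, y) = I₁ x) ∧ (∀ y, ∑ x, Φ (x, y) = I₂ y)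

/-- Parallel compatibility of two instruments. -/
def ParallelCompatible {ιx ιy H K₁ K₂ : Type*} [Fintype ιx] [Fintype ιy]
    [Fintype H] [Fintype K₁] [Fintype K₂]
    (I₁ : ιx → (Matrix H H ℂ →ₗ[ℂ] Matrix K₁ K₁ ℂ))
    (I₂ : ιy → (Matrix H H ℂ →ₗ[ℂ] Matrix K₂ K₂ ℂ)) : Prop :=
  ∃ Φ : ιx × ιy → (Matrix H H ℂ →ₗ[ℂ] Matrix (K₁ × K₂) (K₁ × K₂) ℂ), IsInstrument Φ ∧
    (∀ x ρ, ∑ y, ptraceRight (Φ (x, y) ρ) = I₁ x ρ) ∧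
    (∀ y ρ, ∑ x, ptraceLeft (Φ (x, y) ρ) = I₂ y ρ)

/-- Tensor product of two maps on matrix algebras. -/
def tensorMap {A B C D : Type*} [Fintype A] [Fintype B] [Fintype C] [Fintype D]
    [DecidableEq A] [DecidableEq B]
    (Φ : Matrix A A ℂ →ₗ[ℂ] Matrix C C ℂ) (Ψ : Matrix B B ℂ →ₗ[ℂ] Matrix D D ℂ) :
    Matrix (A × B) (A × B) ℂ →ₗ[ℂ] Matrix (C × D) (C × D) ℂ where
  toFun M := fun p q => ∑ a, ∑ a', ∑ b, ∑ b',
    M (a, b) (a', b') * (Φ (Matrix.single a a' 1)) p.1 q.1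
      * (Ψ (Matrix.single b b' 1)) p.2 q.2
  map_add' M N := by
    funext p q
    show _ = (_ : ℂ) + _
    simp [Matrix.add_apply, add_mul, Finset.sum_add_distrib]
  map_smul' c M := by
    funext p q
    show _ = c * (_ : ℂ)
    simp [Matrix.smul_apply, Finset.mul_sum, mul_assoc]



section NoCloningHelpers

variable {n : Type*} [Fintype n] [DecidableEq n]

lemma psd_smul_outer (c : ℝ) (hc : 0 ≤ c) (w : n → ℂ) :
    (((c : ℝ) : ℂ) • Matrix.vecMulVec w (star w)).PosSemidef := by
  have h := Matrix.posSemidef_self_mul_conjTranspose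
      (Matrix.of fun a (_ : Unit) => ((Real.sqrt c : ℝ) : ℂ) * w a : Matrix n Unit ℂ)
  convert h using 1
  funext a b
  simp only [Matrix.smul_apply, Matrix.vecMulVec_apply, Pi.star_apply, Matrix.mul_apply,
    Matrix.conjTranspose_apply, Finset.univ_unique, Finset.sum_singleton, star_mul',
    Complex.star_def, Complex.conj_ofReal, smul_eq_mul, Matrix.of_apply]
  have hcc : ((Real.sqrt c : ℝ) : ℂ) * ((Real.sqrt c : ℝ) : ℂ) = ((c : ℝ) : ℂ) := by
    rw [← Complex.ofReal_mul, Real.mul_self_sqrt hc]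
  rw [← hcc]; ring

lemma psd_outer (w : n → ℂ) : (Matrix.vecMulVec w (star w)).PosSemidef := by
  simpa using psd_smul_outer 1 zero_le_one w

lemma psd_diag_nonneg {M : Matrix n n ℂ} (hM : M.PosSemidef) (p : n) : 0 ≤ M p p := by
  exact hM.diag_nonneg

lemma psd_row_col_zero {M : Matrix n n ℂ} (hM : M.PosSemidef) (p : n) (h : M p p = 0) :
    (∀ q, M p q = 0) ∧ (∀ q, M q p = 0) := by
  obtain ⟨S, hherm, hmul⟩ : ∃ S : Matrix n n ℂ, S.IsHermitian ∧ S * S = M := by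
    open scoped MatrixOrder in
    exact ⟨CFC.sqrt M, (CFC.sqrt_nonneg M).isSelfAdjoint, CFC.sqrt_mul_sqrt_self M hM.nonneg⟩
  have hrow : ∀ k, S p k = 0 := by
    have h1 : ∑ k, S p k * S k p = 0 := by
      rw [← Matrix.mul_apply, hmul]; exact h
    have hterm : ∀ k, S p k * S k p = (Complex.normSq (S p k) : ℂ) := by
      intro k
      rw [← hherm.apply k p, Complex.star_def, Complex.mul_conj]
    have h2 : ∑ k, (Complex.normSq (S p k) : ℂ) = 0 := by
      rw [← h1]
      exact Finset.sum_congr rfl fun k _ => (hterm k).symm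
    have h3 : ∑ k, Complex.normSq (S p k) = 0 := by exact_mod_cast h2
    intro k
    have := (Finset.sum_eq_zero_iff_of_nonneg
      (fun k _ => Complex.normSq_nonneg (S p k))).mp h3 k (Finset.mem_univ k)
    exact Complex.normSq_eq_zero.mp this
  constructor
  · intro q
    rw [← hmul, Matrix.mul_apply]
    exact Finset.sum_eq_zero fun k _ => by rw [hrow k, zero_mul]
  · intro q
    rw [← hmul, Matrix.mul_apply]
    refine Finset.sum_eq_zero fun k _ => ?_
    rw [← hherm.apply k p, hrow k, star_zero, mul_zero]

lemma cp_psd {H K : Type*} [Fintype H] [Fintype K]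
    {Φ : Matrix H H ℂ →ₗ[ℂ] Matrix K K ℂ} (hΦ : IsCP Φ)
    {ρ : Matrix H H ℂ} (hρ : ρ.PosSemidef) : (Φ ρ).PosSemidef := by
  obtain ⟨m, Ks, hK⟩ := hΦ
  rw [hK]
  refine Finset.sum_induction _ _ (fun a b ha hb => ha.add hb) Matrix.PosSemidef.zero
    (fun i _ => hρ.mul_mul_conjTranspose_same (Ks i))

end NoCloningHelpers

/-- No-cloning: for `dim H ≥ 2` there is no channel
`Λ : L(H) → L(H ⊗ H)` with `Tr₂[Λ(ρ)] = ρ` and `Tr₁[Λ(ρ)] = ρ` for all density matrices. -/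
theorem stmt_10 {H : Type*} [Fintype H] [DecidableEq H] (hdim : 2 ≤ Fintype.card H) :
    ¬ ∃ Λ : Matrix H H ℂ →ₗ[ℂ] Matrix (H × H) (H × H) ℂ, IsChannel Λ ∧
        ∀ ρ, IsDensity ρ → ptraceRight (Λ ρ) = ρ ∧ ptraceLeft (Λ ρ) = ρ := by
  rintro ⟨L, ⟨hCP, _⟩, hmarg⟩
  obtain ⟨i0, i1, hne⟩ := Fintype.exists_pair_of_one_lt_card (by omega : 1 < Fintype.card H)
  set w0 : H → ℂ := fun k => if k = i0 then 1 else 0 with hw0def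
  set w1 : H → ℂ := fun k => if k = i1 then 1 else 0 with hw1def
  set w : H → ℂ := fun k => if k = i0 then 1 else if k = i1 then 1 else 0 with hwdef
  set w' : H → ℂ := fun k => if k = i0 then 1 else if k = i1 then -1 else 0 with hw'def
  set E0 : Matrix H H ℂ := Matrix.vecMulVec w0 (star w0) with hE0def
  set E1 : Matrix H H ℂ := Matrix.vecMulVec w1 (star w1) with hE1def
  set ρ : Matrix H H ℂ := (((1/2 : ℝ) : ℂ)) • Matrix.vecMulVec w (star w) with hρdef
  set ρ' : Matrix H H ℂ := (((1/2 : ℝ) : ℂ)) • Matrix.vecMulVec w' (star w') with hρ'def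
  -- entries
  have hE0e : ∀ a b, E0 a b = if a = i0 ∧ b = i0 then 1 else 0 := by
    intro a b
    simp only [hE0def, Matrix.vecMulVec_apply, Pi.star_apply, hw0def, Complex.star_def,
      apply_ite (starRingEnd ℂ), _root_.map_one, _root_.map_zero]
    by_cases ha : a = i0 <;> by_cases hb : b = i0 <;> simp [ha, hb, hne, Ne.symm hne]
  have hE1e : ∀ a b, E1 a b = if a = i1 ∧ b = i1 then 1 else 0 := by
    intro a b
    simp only [hE1def, Matrix.vecMulVec_apply, Pi.star_apply, hw1def, Complex.star_def,
      apply_ite (starRingEnd ℂ), _root_.map_one, _root_.map_zero]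
    by_cases ha : a = i1 <;> by_cases hb : b = i1 <;> simp [ha, hb, hne, Ne.symm hne]
  have hρe : ∀ a b, ρ a b =
      if (a = i0 ∨ a = i1) ∧ (b = i0 ∨ b = i1) then 1/2 else 0 := by
    intro a b
    simp only [hρdef, Matrix.smul_apply, Matrix.vecMulVec_apply, Pi.star_apply, hwdef,
      Complex.star_def, apply_ite (starRingEnd ℂ), _root_.map_one, _root_.map_zero, smul_eq_mul]
    by_cases ha : a = i0 <;> by_cases ha' : a = i1 <;> by_cases hb : b = i0 <;>
      by_cases hb' : b = i1 <;> simp [ha, ha', hb, hb', hne, Ne.symm hne] <;> norm_num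
  have hρ'e : ∀ a b, ρ' a b =
      if a = i0 then (if b = i0 then 1/2 else if b = i1 then -(1/2) else 0)
      else if a = i1 then (if b = i0 then -(1/2) else if b = i1 then 1/2 else 0) else 0 := by
    intro a b
    simp only [hρ'def, Matrix.smul_apply, Matrix.vecMulVec_apply, Pi.star_apply, hw'def,
      Complex.star_def, apply_ite (starRingEnd ℂ), _root_.map_one, _root_.map_zero, _root_.map_neg, smul_eq_mul]
    by_cases ha : a = i0 <;> by_cases ha' : a = i1 <;> by_cases hb : b = i0 <;>
      by_cases hb' : b = i1 <;> simp [ha, ha', hb, hb', hne, Ne.symm hne] <;> norm_num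
  -- densities
  have hE0psd : E0.PosSemidef := psd_outer w0
  have hE1psd : E1.PosSemidef := psd_outer w1
  have hρpsd : ρ.PosSemidef := psd_smul_outer (1/2) (by norm_num) w
  have hρ'psd : ρ'.PosSemidef := psd_smul_outer (1/2) (by norm_num) w'
  have htrace : ∀ (M : Matrix H H ℂ) (c0 c1 : ℂ), (∀ a, M a a =
      (if a = i0 then c0 else 0) + (if a = i1 then c1 else 0)) → M.trace = c0 + c1 := by
    intro M c0 c1 hM
    rw [Matrix.trace]
    calc ∑ a, M.diag a = ∑ a, ((if a = i0 then c0 else 0) + (if a = i1 then c1 else 0)) :=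
          Finset.sum_congr rfl fun a _ => hM a
      _ = c0 + c1 := by
          rw [Finset.sum_add_distrib, Finset.sum_ite_eq', Finset.sum_ite_eq']
          simp
  have dE0 : IsDensity E0 := by
    refine ⟨hE0psd, ?_⟩
    have := htrace E0 1 0 (fun a => by
      rw [hE0e]; by_cases ha : a = i0 <;> by_cases ha' : a = i1 <;>
        simp [ha, ha', hne, Ne.symm hne] <;> simp_all <;> norm_num)
    rw [this]; norm_num
  have dE1 : IsDensity E1 := by
    refine ⟨hE1psd, ?_⟩
    have := htrace E1 0 1 (fun a => by
      rw [hE1e]; by_cases ha : a = i0 <;> by_cases ha' : a = i1 <;>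
        simp [ha, ha', hne, Ne.symm hne] <;> simp_all <;> norm_num)
    rw [this]; norm_num
  have dρ : IsDensity ρ := by
    refine ⟨hρpsd, ?_⟩
    have := htrace ρ (1/2) (1/2) (fun a => by
      rw [hρe]; by_cases ha : a = i0 <;> by_cases ha' : a = i1 <;>
        simp [ha, ha', hne, Ne.symm hne] <;> simp_all <;> norm_num)
    rw [this]; norm_num
  have dρ' : IsDensity ρ' := by
    refine ⟨hρ'psd, ?_⟩
    have := htrace ρ' (1/2) (1/2) (fun a => by
      rw [hρ'e]; by_cases ha : a = i0 <;> by_cases ha' : a = i1 <;>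
        simp [ha, ha', hne, Ne.symm hne] <;> simp_all <;> norm_num)
    rw [this]; norm_num
  -- the key sum identity
  have hEsum : ρ + ρ' = E0 + E1 := by
    funext a b
    rw [Matrix.add_apply, Matrix.add_apply, hρe, hρ'e, hE0e, hE1e]
    by_cases ha : a = i0 <;> by_cases ha' : a = i1 <;> by_cases hb : b = i0 <;>
      by_cases hb' : b = i1 <;> simp [ha, ha', hb, hb', hne, Ne.symm hne] <;> simp_all <;> norm_num
  have hLsum : L ρ + L ρ' = L E0 + L E1 := by
    rw [← map_add, ← map_add, hEsum]
  -- positivity of images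
  have hLρ : (L ρ).PosSemidef := cp_psd hCP hρpsd
  have hLρ' : (L ρ').PosSemidef := cp_psd hCP hρ'psd
  have hLE0 : (L E0).PosSemidef := cp_psd hCP hE0psd
  have hLE1 : (L E1).PosSemidef := cp_psd hCP hE1psd
  -- diagonal of L E0 vanishes off (i0,i0)
  have hEdiag : ∀ (E : Matrix H H ℂ) (j : H), (L E).PosSemidef →
      (∀ a b, E a b = if a = j ∧ b = j then 1 else 0) →
      ptraceRight (L E) = E → ptraceLeft (L E) = E →
      ∀ a b : H, (a, b) ≠ (j, j) → L E (a, b) (a, b) = 0 := by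
    intro E j hpsd hEe hR hL' a b hab
    by_cases ha : a = j
    · have hb : b ≠ j := fun hb => hab (by rw [ha, hb])
      have hsum : ∑ k, L E (k, b) (k, b) = 0 := by
        have h := congrFun (congrFun hL' b) b
        rw [hEe] at h
        simpa [ptraceLeft, hb] using h
      rw [ha]
      exact (Finset.sum_eq_zero_iff_of_nonneg
        (fun k _ => psd_diag_nonneg hpsd ((k, b)))).mp hsum j (Finset.mem_univ j)
    · have hsum : ∑ k, L E (a, k) (a, k) = 0 := by
        have h := congrFun (congrFun hR a) a
        rw [hEe] at h
        simpa [ptraceRight, ha] using h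
      exact (Finset.sum_eq_zero_iff_of_nonneg
        (fun k _ => psd_diag_nonneg hpsd ((a, k)))).mp hsum b (Finset.mem_univ b)
  have hE0diag := hEdiag E0 i0 hLE0 hE0e (hmarg E0 dE0).1 (hmarg E0 dE0).2
  have hE1diag := hEdiag E1 i1 hLE1 hE1e (hmarg E1 dE1).1 (hmarg E1 dE1).2
  -- diagonal of L ρ vanishes off (i0,i0),(i1,i1)
  have hdiag : ∀ p : H × H, p ≠ (i0, i0) → p ≠ (i1, i1) → L ρ p p = 0 := by
    intro p h0 h1
    have hsum : L ρ p p + L ρ' p p = 0 := by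
      have := congrFun (congrFun hLsum p) p
      rw [Matrix.add_apply, Matrix.add_apply] at this
      rcases p with ⟨a, b⟩
      rw [this, hE0diag a b h0, hE1diag a b h1, add_zero]
    have h2 : L ρ p p ≤ 0 := by
      calc L ρ p p ≤ L ρ p p + L ρ' p p := le_add_of_nonneg_right (psd_diag_nonneg hLρ' p)
        _ = 0 := hsum
    exact le_antisymm h2 (psd_diag_nonneg hLρ p)
  -- final contradiction via the (i0, i1) entry of the right marginal of L ρ
  have hfin := congrFun (congrFun (hmarg ρ dρ).1 i0) i1
  have hzero : ptraceRight (L ρ) i0 i1 = 0 := by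
    show ∑ k, L ρ (i0, k) (i1, k) = 0
    apply Finset.sum_eq_zero
    intro k _
    by_cases hk : k = i0
    · rw [hk]
      refine (psd_row_col_zero hLρ (i1, i0) (hdiag _ ?_ ?_)).2 _
      · simp [Prod.ext_iff, Ne.symm hne]
      · simp [Prod.ext_iff, hne]
    · refine (psd_row_col_zero hLρ (i0, k) (hdiag _ ?_ ?_)).1 _
      · simp [Prod.ext_iff, hk]
      · simp [Prod.ext_iff, hne]
  rw [hzero, hρe] at hfin
  simp [hne, Ne.symm hne] at hfin


end
end

section
/- Two observables A and B on H are compatible if and only if there exist an A-compatible instrument I_A and a B-compatible instrument I_B (with the same output space) that are traditionally compatible. -/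
open Matrix BigOperators ComplexOrder

noncomputable section

/-! ### Auxiliary lemmas -/

set_option linter.unusedSectionVars false

section AuxPSD
variable {H K : Type*} [Fintype H] [DecidableEq H] [Fintype K] [DecidableEq K]

lemma aux_psd_add {M N : Matrix H H ℂ} (hM : M.PosSemidef) (hN : N.PosSemidef) :
    (M + N).PosSemidef := by
  refine .of_dotProduct_mulVec_nonneg (hM.1.add hN.1) fun x => ?_
  rw [add_mulVec, dotProduct_add]
  exact add_nonneg (hM.dotProduct_mulVec_nonneg x) (hN.dotProduct_mulVec_nonneg x)

lemma aux_psd_zero : (0 : Matrix H H ℂ).PosSemidef := by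
  refine .of_dotProduct_mulVec_nonneg Matrix.isHermitian_zero fun x => ?_
  simp

lemma aux_psd_sum {ι : Type*} (s : Finset ι) (f : ι → Matrix H H ℂ)
    (h : ∀ i ∈ s, (f i).PosSemidef) : (∑ i ∈ s, f i).PosSemidef :=
  Finset.sum_induction f _ (fun _ _ => aux_psd_add) aux_psd_zero h

lemma aux_psd_trace_nonneg {M : Matrix H H ℂ} (hM : M.PosSemidef) : 0 ≤ M.trace := by
  rw [Matrix.trace]
  refine Finset.sum_nonneg fun i _ => ?_
  have := hM.dotProduct_mulVec_nonneg (Pi.single i 1)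
  simpa [mulVec_single, dotProduct, Pi.single_apply, Matrix.diag] using this

lemma aux_psd_vecMulVec (v : H → ℂ) : (vecMulVec v (star v)).PosSemidef := by
  have h : vecMulVec v (star v) = replicateCol Unit v * (replicateCol Unit v)ᴴ := by
    rw [conjTranspose_replicateCol, ← vecMulVec_eq]
  rw [h]
  exact posSemidef_self_mul_conjTranspose _

/-- The "dual observable effect" of a map: `(dualM Φ) k j = tr (Φ E_{jk})`. -/
def dualM (Φ : Matrix H H ℂ →ₗ[ℂ] Matrix K K ℂ) : Matrix H H ℂ :=
  Matrix.of fun k j => (Φ (Matrix.single j k 1)).trace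

lemma aux_trace_stdBasisMatrix_mul (j k : H) (M : Matrix H H ℂ) :
    (Matrix.single j k 1 * M).trace = M k j := by
  simp [Matrix.trace, Matrix.diag, mul_apply, Matrix.single, ite_and, Finset.sum_ite_eq]

lemma aux_trace_dualM (Φ : Matrix H H ℂ →ₗ[ℂ] Matrix K K ℂ) (ρ : Matrix H H ℂ) :
    (Φ ρ).trace = (ρ * dualM Φ).trace := by
  nth_rewrite 1 [matrix_eq_sum_single ρ]
  have h1 : ∀ a b : H, Matrix.single a b (ρ a b) = ρ a b • Matrix.single a b 1 := by
    intro a b; simp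
  simp_rw [h1, map_sum, _root_.map_smul, trace_sum, trace_smul]
  rw [Matrix.trace]
  simp only [Matrix.diag, mul_apply, dualM, Matrix.of_apply, smul_eq_mul]

lemma aux_quad_eq_trace (M : Matrix H H ℂ) (x : H → ℂ) :
    star x ⬝ᵥ (M *ᵥ x) = (vecMulVec x (star x) * M).trace := by
  simp only [dotProduct, mulVec, Pi.star_apply, Matrix.trace, Matrix.diag, mul_apply,
    vecMulVec_apply]
  rw [Finset.sum_comm]
  refine Finset.sum_congr rfl fun b _ => ?_
  rw [Finset.mul_sum]
  refine Finset.sum_congr rfl fun a _ => by ring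

open scoped MatrixOrder in
lemma aux_posSemidef_eq {M : Matrix H H ℂ} (hM : M.PosSemidef) :
    ∃ B : Matrix H H ℂ, M = Bᴴ * B := by
  have h0 : 0 ≤ M := hM.nonneg
  refine ⟨CFC.sqrt M, ?_⟩
  have hs : IsSelfAdjoint (CFC.sqrt M) := (CFC.sqrt_nonneg M).isSelfAdjoint
  rw [← star_eq_conjTranspose, hs.star_eq, CFC.sqrt_mul_sqrt_self M h0]

lemma aux_cp_psd {Φ : Matrix H H ℂ →ₗ[ℂ] Matrix K K ℂ} (hΦ : IsCP Φ)
    {M : Matrix H H ℂ} (hM : M.PosSemidef) : (Φ M).PosSemidef := by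
  obtain ⟨m, Ks, hKs⟩ := hΦ
  obtain ⟨B, hB⟩ := aux_posSemidef_eq hM
  rw [hKs]
  refine aux_psd_sum _ _ fun i _ => ?_
  have : Ks i * M * (Ks i)ᴴ = (Ks i * Bᴴ) * (Ks i * Bᴴ)ᴴ := by
    rw [hB, conjTranspose_mul, conjTranspose_conjTranspose]
    simp only [Matrix.mul_assoc]
  rw [this]
  exact posSemidef_self_mul_conjTranspose _

lemma aux_dualM_psd {Φ : Matrix H H ℂ →ₗ[ℂ] Matrix K K ℂ} (hΦ : IsCP Φ) :
    (dualM Φ).PosSemidef := by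
  refine .of_dotProduct_mulVec_nonneg ?_ ?_
  · obtain ⟨m, Ks, hKs⟩ := hΦ
    have hstd : ∀ a b : H, (Matrix.single a b (1:ℂ))ᴴ = Matrix.single b a 1 := by
      intro a b
      ext p q
      by_cases h1 : a = q <;> by_cases h2 : b = p <;>
        simp [conjTranspose_apply, Matrix.single, h1, h2]
    ext k j
    simp only [conjTranspose_apply, dualM, Matrix.of_apply]
    rw [← trace_conjTranspose]
    congr 1
    rw [hKs, hKs, conjTranspose_sum]
    refine Finset.sum_congr rfl fun i _ => ?_
    simp only [conjTranspose_mul, conjTranspose_conjTranspose, hstd]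
    rw [Matrix.mul_assoc]
  · intro x
    rw [aux_quad_eq_trace, ← aux_trace_dualM]
    exact aux_psd_trace_nonneg (aux_cp_psd hΦ (aux_psd_vecMulVec x))

end AuxPSD

section AuxDensity
variable {H : Type*} [Fintype H] [DecidableEq H]

lemma aux_vecMulVec_zero : vecMulVec (0 : H → ℂ) (star (0 : H → ℂ)) = 0 := by
  ext a b
  simp [vecMulVec_apply]

lemma aux_trace_vecMulVec (v : H → ℂ) :
    (vecMulVec v (star v)).trace = ((∑ i, Complex.normSq (v i) : ℝ) : ℂ) := by
  push_cast
  simp [Matrix.trace, Matrix.diag, vecMulVec_apply, Complex.mul_conj]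

lemma aux_density_smul (v : H → ℂ) (hv : v ≠ 0) :
    IsDensity ((((∑ i, Complex.normSq (v i) : ℝ))⁻¹ : ℂ) • vecMulVec v (star v)) := by
  have hpsd := aux_psd_vecMulVec v
  set r : ℝ := ∑ i, Complex.normSq (v i) with hr
  have hrpos : 0 < r := by
    obtain ⟨i, hi⟩ := Function.ne_iff.mp hv
    refine Finset.sum_pos' (fun j _ => Complex.normSq_nonneg _) ⟨i, Finset.mem_univ i, ?_⟩
    simpa [Complex.normSq_pos] using hi
  constructor
  · refine .of_dotProduct_mulVec_nonneg ?_ ?_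
    · show _ᴴ = _
      rw [conjTranspose_smul, hpsd.1.eq]
      congr 1
      simp [Complex.ext_iff]
    · intro x
      rw [smul_mulVec, dotProduct_smul, smul_eq_mul]
      have h1 : (0:ℂ) ≤ ((r⁻¹ : ℝ) : ℂ) := by
        rw [Complex.ofReal_inv] at *
        norm_cast
        positivity
      have h2 := hpsd.dotProduct_mulVec_nonneg x
      calc (0:ℂ) = ((r:ℂ))⁻¹ * 0 := by ring
      _ ≤ _ := by
        push_cast at h1 ⊢
        exact mul_le_mul_of_nonneg_left h2 h1
  · rw [trace_smul, aux_trace_vecMulVec, ← hr, smul_eq_mul]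
    push_cast
    field_simp

lemma aux_key (f g : Matrix H H ℂ →ₗ[ℂ] ℂ)
    (h : ∀ ρ, IsDensity ρ → f ρ = g ρ) (v : H → ℂ) :
    f (vecMulVec v (star v)) = g (vecMulVec v (star v)) := by
  by_cases hv : v = 0
  · rw [hv, aux_vecMulVec_zero, map_zero, map_zero]
  · set r : ℝ := ∑ i, Complex.normSq (v i) with hr
    have hrpos : 0 < r := by
      obtain ⟨i, hi⟩ := Function.ne_iff.mp hv
      refine Finset.sum_pos' (fun j _ => Complex.normSq_nonneg _) ⟨i, Finset.mem_univ i, ?_⟩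
      simpa [Complex.normSq_pos] using hi
    have hs := h _ (aux_density_smul v hv)
    rw [_root_.map_smul, _root_.map_smul, smul_eq_mul, smul_eq_mul, ← hr] at hs
    have hne : (((r⁻¹ : ℝ)) : ℂ) ≠ 0 := by
      simp [hrpos.ne']
    rw [Complex.ofReal_inv] at hne
    exact mul_left_cancel₀ hne hs

/-- The vectors used for polarization. -/
def polVec (j k : H) (c : ℂ) : H → ℂ :=
  (Pi.single j 1 : H → ℂ) + c • (Pi.single k 1 : H → ℂ)

lemma aux_polarization (j k : H) :
    Matrix.single j k (1:ℂ) = (4:ℂ)⁻¹ •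
      (vecMulVec (polVec j k 1) (star (polVec j k 1))
        + Complex.I • vecMulVec (polVec j k Complex.I) (star (polVec j k Complex.I))
        - vecMulVec (polVec j k (-1)) (star (polVec j k (-1)))
        - Complex.I • vecMulVec (polVec j k (-Complex.I)) (star (polVec j k (-Complex.I)))) := by
  ext a b
  simp only [Matrix.smul_apply, Matrix.sub_apply, Matrix.add_apply, vecMulVec_apply,
    Pi.star_apply, polVec, Pi.add_apply, Pi.smul_apply, Pi.single_apply, Matrix.single,
    Matrix.of_apply, smul_eq_mul, star_add, star_mul', RCLike.star_def,
    map_zero, Complex.conj_I, map_neg]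
  by_cases h1 : j = a <;> by_cases h2 : k = b <;> by_cases h3 : j = b <;> by_cases h4 : k = a <;>
    (try subst h1) <;> (try subst h2) <;> simp_all <;> (try split_ifs) <;> (try simp_all) <;> (try ring_nf) <;>
    (try simp_all [Complex.I_sq]) <;> (try ring_nf) <;> (try tauto)

/-- Two linear functionals that agree on all density matrices agree everywhere. -/
lemma aux_ext_density (f g : Matrix H H ℂ →ₗ[ℂ] ℂ)
    (h : ∀ ρ, IsDensity ρ → f ρ = g ρ) : f = g := by
  have key := aux_key f g h
  have hbasis : ∀ j k : H, f (Matrix.single j k 1) = g (Matrix.single j k 1) := by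
    intro j k
    rw [aux_polarization j k]
    simp only [_root_.map_smul, map_add, map_sub]
    rw [key, key, key, key]
  ext ρ
  conv_lhs => rw [matrix_eq_sum_single ρ]
  conv_rhs => rw [matrix_eq_sum_single ρ]
  rw [map_sum, map_sum]
  refine Finset.sum_congr rfl fun a _ => ?_
  rw [map_sum, map_sum]
  refine Finset.sum_congr rfl fun b _ => ?_
  have hsm : Matrix.single a b (ρ a b) = ρ a b • Matrix.single a b 1 := by simp
  rw [hsm, _root_.map_smul, _root_.map_smul, hbasis]

end AuxDensity

section AuxTM
variable {H : Type*} [Fintype H] [DecidableEq H]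

/-- The "measure-and-discard" map sending `ρ` to `tr (ρ P) • 1` on a one-dimensional space. -/
def tm (P : Matrix H H ℂ) : Matrix H H ℂ →ₗ[ℂ] Matrix (Fin 1) (Fin 1) ℂ where
  toFun ρ := (ρ * P).trace • 1
  map_add' ρ σ := by
    rw [Matrix.add_mul, trace_add, add_smul]
  map_smul' c ρ := by
    rw [Matrix.smul_mul, trace_smul, smul_assoc, RingHom.id_apply]

lemma tm_apply (P ρ : Matrix H H ℂ) : tm P ρ = (ρ * P).trace • 1 := rfl

lemma tm_sum {ι : Type*} [Fintype ι] (P : ι → Matrix H H ℂ) :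
    ∑ i, tm (P i) = tm (∑ i, P i) := by
  refine LinearMap.ext fun ρ => ?_
  rw [LinearMap.sum_apply]
  simp_rw [tm_apply]
  rw [Matrix.mul_sum, trace_sum, Finset.sum_smul]

lemma tm_trace (P ρ : Matrix H H ℂ) : (tm P ρ).trace = (ρ * P).trace := by
  rw [tm_apply, trace_smul, trace_one, smul_eq_mul]
  norm_num

lemma tm_cp {P : Matrix H H ℂ} (hP : P.PosSemidef) : IsCP (tm P) := by
  obtain ⟨B, hB⟩ := aux_posSemidef_eq hP
  refine ⟨Fintype.card H,
    fun i => Matrix.of fun (_ : Fin 1) j => B ((Fintype.equivFin H).symm i) j, fun ρ => ?_⟩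
  ext a b
  have hab : a = b := Subsingleton.elim a b
  subst hab
  have hone : (1 : Matrix (Fin 1) (Fin 1) ℂ) a a = 1 := Matrix.one_apply_eq a
  rw [tm_apply, Matrix.smul_apply, hone, smul_eq_mul, mul_one]
  have hside : ∀ i : Fin (Fintype.card H),
      (Matrix.of (fun (_ : Fin 1) j => B ((Fintype.equivFin H).symm i) j) * ρ *
          (Matrix.of (fun (_ : Fin 1) j => B ((Fintype.equivFin H).symm i) j))ᴴ) a a
        = (B * ρ * Bᴴ) ((Fintype.equivFin H).symm i) ((Fintype.equivFin H).symm i) := by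
    intro i
    simp [mul_apply, conjTranspose_apply]
  rw [Matrix.sum_apply]
  simp_rw [hside]
  rw [Equiv.sum_comp (Fintype.equivFin H).symm
    (fun l => (B * ρ * Bᴴ) l l)]
  have : ∑ l, (B * ρ * Bᴴ) l l = (B * ρ * Bᴴ).trace := rfl
  rw [this, hB, ← Matrix.mul_assoc, Matrix.trace_mul_cycle]

end AuxTM

/-- Observables `A` and `B` are compatible iff there exist an `A`-compatible
instrument and a `B`-compatible instrument (with the same output space) that are
traditionally compatible. -/
theorem stmt_12 {ιx ιy H : Type*} [Fintype ιx] [Fintype ιy] [Fintype H] [DecidableEq H]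
    (A : ιx → Matrix H H ℂ) (hA : IsPOVM A)
    (B : ιy → Matrix H H ℂ) (hB : IsPOVM B) :
    ObsCompatible A B ↔
      ∃ (m : ℕ) (IA : ιx → (Matrix H H ℂ →ₗ[ℂ] Matrix (Fin m) (Fin m) ℂ))
        (IB : ιy → (Matrix H H ℂ →ₗ[ℂ] Matrix (Fin m) (Fin m) ℂ)),
        IsInstrument IA ∧ IsInstrument IB ∧
        ACompatible A IA ∧ ACompatible B IB ∧
        TraditionallyCompatible IA IB := by
  constructor
  · rintro ⟨G, hG, hGA, hGB⟩
    refine ⟨1, fun x => tm (A x), fun y => tm (B y), ⟨fun x => tm_cp (hA.1 x), ?_⟩,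
      ⟨fun y => tm_cp (hB.1 y), ?_⟩, fun ρ _ x => tm_trace _ _, fun ρ _ y => tm_trace _ _,
      fun p => tm (G p), ⟨fun p => tm_cp (hG.1 p), ?_⟩, ?_, ?_⟩
    · intro ρ
      rw [tm_sum, hA.2, tm_trace, Matrix.mul_one]
    · intro ρ
      rw [tm_sum, hB.2, tm_trace, Matrix.mul_one]
    · intro ρ
      rw [tm_sum, hG.2, tm_trace, Matrix.mul_one]
    · intro x
      rw [tm_sum, hGA x]
    · intro y
      rw [tm_sum, hGB y]
  · rintro ⟨m, IA, IB, hIA, hIB, hACa, hBCb, Φ, hΦ, hmA, hmB⟩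
    have hdualA : ∀ x ρ, ((IA x) ρ).trace = (ρ * A x).trace := by
      intro x
      have := aux_ext_density ((Matrix.traceLinearMap (Fin m) ℂ ℂ).comp (IA x))
        ((Matrix.traceLinearMap H ℂ ℂ).comp (LinearMap.mulRight ℂ (A x)))
        (fun ρ hρ => hACa ρ hρ x)
      intro ρ
      exact LinearMap.congr_fun this ρ
    have hdualB : ∀ y ρ, ((IB y) ρ).trace = (ρ * B y).trace := by
      intro y
      have := aux_ext_density ((Matrix.traceLinearMap (Fin m) ℂ ℂ).comp (IB y))
        ((Matrix.traceLinearMap H ℂ ℂ).comp (LinearMap.mulRight ℂ (B y)))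
        (fun ρ hρ => hBCb ρ hρ y)
      intro ρ
      exact LinearMap.congr_fun this ρ
    refine ⟨fun p => dualM (Φ p), ⟨fun p => aux_dualM_psd (hΦ.1 p), ?_⟩, ?_, ?_⟩
    · ext k j
      rw [Matrix.sum_apply]
      have hsum : ∀ j' k' : H, ∑ p : ιx × ιy, dualM (Φ p) k' j'
          = ((∑ p : ιx × ιy, Φ p) (Matrix.single j' k' 1)).trace := by
        intro j' k'
        rw [LinearMap.sum_apply, trace_sum]
        rfl
      rw [hsum, hΦ.2 (Matrix.single j k 1)]
      have h1 := aux_trace_stdBasisMatrix_mul j k (1 : Matrix H H ℂ)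
      rw [Matrix.mul_one] at h1
      rw [h1]
    · intro x
      ext k j
      rw [Matrix.sum_apply]
      have : ∑ y, dualM (Φ (x, y)) k j
          = ((∑ y, Φ (x, y)) (Matrix.single j k 1)).trace := by
        rw [LinearMap.sum_apply, trace_sum]
        rfl
      rw [this, hmA x, hdualA x, aux_trace_stdBasisMatrix_mul]
    · intro y
      ext k j
      rw [Matrix.sum_apply]
      have : ∑ x, dualM (Φ (x, y)) k j
          = ((∑ x, Φ (x, y)) (Matrix.single j k 1)).trace := by
        rw [LinearMap.sum_apply, trace_sum]
        rfl
      rw [this, hmB y, hdualB y, aux_trace_stdBasisMatrix_mul]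


end
end
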